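/- arXiv:1206.5478 — 4 statements merged into one kernel-verified Lean document; each statement's English description precedes it below -/
import Mathlib

section
/- Let a < p < b and let f : ℝ → ℝ be differentiable on [a,b], strictly convex on [a,p] and strictly concave on [p,b]. If x_l ∈ (a,b] satisfies f'(x_l) = (f(x_l) − f(a))/(x_l − a) and x_r ∈ [a,b) satisfies f'(x_r) = (f(b) − f(x_r))/(b − x_r), then a ≤ x_r < p < x_l ≤ b; in particular x_r < x_l. -/
open Set

/-- For `f` differentiable on `[a,b]`, strictly convex on `[a,p]` and strictly concave
on `[p,b]` (with `a < p < b`), any left tangency point `x_l ∈ (a,b]` and any right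
tangency point `x_r ∈ [a,b)` satisfy `a ≤ x_r < p < x_l ≤ b`; in particular `x_r < x_l`. -/
theorem tangency_points_straddle_inflection (a b p : ℝ) (hap : a < p) (hpb : p < b)
    (f : ℝ → ℝ)
    (hd : ∀ x ∈ Set.Icc a b, DifferentiableAt ℝ f x)
    (hconv : StrictConvexOn ℝ (Set.Icc a p) f)
    (hconc : StrictConcaveOn ℝ (Set.Icc p b) f)
    (xl xr : ℝ) (hxl : xl ∈ Set.Ioc a b) (hxr : xr ∈ Set.Ico a b)
    (heql : deriv f xl = (f xl - f a) / (xl - a))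
    (heqr : deriv f xr = (f b - f xr) / (b - xr)) :
    a ≤ xr ∧ xr < p ∧ p < xl ∧ xl ≤ b ∧ xr < xl := by
  obtain ⟨hal, hlb⟩ := hxl
  obtain ⟨har, hrb⟩ := hxr
  have hpl : p < xl := by
    by_contra h
    push_neg at h
    have hlt := hconv.slope_lt_deriv (x := a) (y := xl)
      ⟨le_refl a, le_of_lt hap⟩ ⟨le_of_lt hal, h⟩ hal
      (hd xl ⟨le_of_lt hal, hlb⟩)
    simp only [slope_def_field] at hlt
    rw [heql] at hlt
    exact lt_irrefl _ hlt
  have hrp : xr < p := by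
    by_contra h
    push_neg at h
    have hlt := hconc.slope_lt_deriv (x := xr) (y := b)
      ⟨h, le_of_lt hrb⟩ ⟨le_of_lt hpb, le_refl b⟩ hrb
      (hd xr ⟨har, le_of_lt hrb⟩)
    simp only [slope_def_field] at hlt
    rw [heqr] at hlt
    exact lt_irrefl _ hlt
  exact ⟨har, hrp, hpl, hlb, hrp.trans hpl⟩
end

section
/- Let a < p < b, let f : ℝ → ℝ be twice differentiable on [a,b] with f''(x) > 0 for x ∈ (a,p) and f''(x) < 0 for x ∈ (p,b), and suppose x_l ∈ (p,b) satisfies f(x_l) − f(a) − f'(x_l)·(x_l − a) = 0. Define S_l(x) = ∫_a^x f(t) dt − ((f(a)+f(x))/2)·(x−a). Then S_l is strictly decreasing on [a, x_l] and strictly increasing on [x_l, b]; in particular x_l is the unique minimizer of S_l on [a,b]. -/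
open Set intervalIntegral

/-- For a convex/concave `f` on `[a,b]` with inflection point `p` (`f'' > 0` on `(a,p)`,
`f'' < 0` on `(p,b)`) and left tangency point `x_l ∈ (p,b)`
(i.e. `f(x_l) − f(a) − f'(x_l)·(x_l − a) = 0`), the left-surface
`S_l(x) = ∫_a^x f(t) dt − ((f(a)+f(x))/2)·(x−a)` is strictly decreasing on `[a, x_l]`
and strictly increasing on `[x_l, b]`; in particular `x_l` is the unique minimizer of
`S_l` on `[a,b]`. -/
theorem left_surface_min_at_left_tangency (a b p xl : ℝ) (hap : a < p) (hpb : p < b)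
    (f : ℝ → ℝ)
    (hd1 : ∀ x ∈ Set.Icc a b, DifferentiableAt ℝ f x)
    (hd2 : ∀ x ∈ Set.Icc a b, DifferentiableAt ℝ (deriv f) x)
    (hpos : ∀ x ∈ Set.Ioo a p, 0 < deriv (deriv f) x)
    (hneg : ∀ x ∈ Set.Ioo p b, deriv (deriv f) x < 0)
    (hxl : xl ∈ Set.Ioo p b)
    (heq : f xl - f a - deriv f xl * (xl - a) = 0) :
    StrictAntiOn (fun x => (∫ t in a..x, f t) - ((f a + f x) / 2) * (x - a))
      (Set.Icc a xl) ∧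
    StrictMonoOn (fun x => (∫ t in a..x, f t) - ((f a + f x) / 2) * (x - a))
      (Set.Icc xl b) ∧
    ∀ x ∈ Set.Icc a b, x ≠ xl →
      ((∫ t in a..xl, f t) - ((f a + f xl) / 2) * (xl - a)) <
        ((∫ t in a..x, f t) - ((f a + f x) / 2) * (x - a)) := by
  obtain ⟨hpx, hxb⟩ := hxl
  have hax : a < xl := hap.trans hpx
  have hab : a < b := hap.trans hpb
  set S : ℝ → ℝ := fun x => (∫ t in a..x, f t) - ((f a + f x) / 2) * (x - a) with hS
  set g : ℝ → ℝ := fun x => f x - f a - deriv f x * (x - a) with hgdef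
  have hfc : ContinuousOn f (Icc a b) := fun x hx => (hd1 x hx).continuousAt.continuousWithinAt
  have hf'c : ContinuousOn (deriv f) (Icc a b) :=
    fun x hx => (hd2 x hx).continuousAt.continuousWithinAt
  have hgc : ContinuousOn g (Icc a b) := by
    apply ((hfc.sub continuousOn_const).sub (hf'c.mul ((continuousOn_id).sub continuousOn_const)))
  -- derivative of g on the open interval
  have hgd : ∀ x ∈ Ioo a b, HasDerivAt g (-(deriv (deriv f) x * (x - a))) x := by
    intro x hx
    have hx' : x ∈ Icc a b := Ioo_subset_Icc_self hx
    have h1 : HasDerivAt f (deriv f x) x := (hd1 x hx').hasDerivAt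
    have h2 : HasDerivAt (deriv f) (deriv (deriv f) x) x := (hd2 x hx').hasDerivAt
    have h3 : HasDerivAt (fun y => y - a) 1 x := by
      simpa using (hasDerivAt_id x).sub_const a
    have h := (h1.sub_const (f a)).sub (h2.mul h3)
    refine h.congr_deriv ?_
    ring
  have hga : g a = 0 := by simp [hgdef]
  have hgxl : g xl = 0 := heq
  -- g strictly decreasing on [a,p], strictly increasing on [p,b]
  have hganti : StrictAntiOn g (Icc a p) := by
    apply strictAntiOn_of_deriv_neg (convex_Icc a p)
      (hgc.mono (Icc_subset_Icc le_rfl hpb.le))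
    intro x hx
    rw [interior_Icc] at hx
    have hx' : x ∈ Ioo a b := ⟨hx.1, hx.2.trans hpb⟩
    rw [(hgd x hx').deriv]
    have := hpos x hx
    nlinarith [hx.1]
  have hgmono : StrictMonoOn g (Icc p b) := by
    apply strictMonoOn_of_deriv_pos (convex_Icc p b)
      (hgc.mono (Icc_subset_Icc hap.le le_rfl))
    intro x hx
    rw [interior_Icc] at hx
    have hx' : x ∈ Ioo a b := ⟨hap.trans hx.1, hx.2⟩
    rw [(hgd x hx').deriv]
    have := hneg x hx
    nlinarith [hap.trans hx.1]
  have hgneg : ∀ x ∈ Ioo a xl, g x < 0 := by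
    intro x hx
    rcases le_or_gt x p with h | h
    · have := hganti ⟨le_rfl, hap.le⟩ ⟨hx.1.le, h⟩ hx.1
      linarith [hga ▸ this]
    · have := hgmono ⟨h.le, (hx.2.trans hxb).le⟩ ⟨hpx.le, hxb.le⟩ hx.2
      linarith [hgxl ▸ this]
  have hgpos : ∀ x ∈ Ioo xl b, 0 < g x := by
    intro x hx
    have := hgmono ⟨hpx.le, hxb.le⟩ ⟨(hpx.trans hx.1).le, hx.2.le⟩ hx.1
    linarith [hgxl ▸ this]
  -- derivative of S
  have hSd : ∀ x ∈ Ioo a b, HasDerivAt S (g x / 2) x := by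
    intro x hx
    have hx' : x ∈ Icc a b := Ioo_subset_Icc_self hx
    have hint : IntervalIntegrable f MeasureTheory.volume a x := by
      apply (hfc.mono ?_).intervalIntegrable
      rw [uIcc_of_le hx'.1]
      exact Icc_subset_Icc le_rfl hx'.2
    have hmeas : StronglyMeasurableAtFilter f (nhds x) MeasureTheory.volume :=
      (hfc.mono Ioo_subset_Icc_self).stronglyMeasurableAtFilter isOpen_Ioo x hx
    have h1 : HasDerivAt (fun u => ∫ t in a..u, f t) (f x) x :=
      integral_hasDerivAt_right hint hmeas (hd1 x hx').continuousAt
    have h2 : HasDerivAt f (deriv f x) x := (hd1 x hx').hasDerivAt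
    have h3 : HasDerivAt (fun y => (f a + f y) / 2 * (y - a))
        ((deriv f x) / 2 * (x - a) + (f a + f x) / 2 * 1) x := by
      exact (((hasDerivAt_const x (f a)).add h2).div_const 2).mul
        ((hasDerivAt_id x).sub_const a) |>.congr_deriv (by simp only [id_eq, Pi.add_apply]; ring)
    have h := h1.sub h3
    refine h.congr_deriv ?_
    simp only [hgdef, id_eq]; ring
  -- continuity of S on [a,b]
  have hSc : ContinuousOn S (Icc a b) := by
    have hint : MeasureTheory.IntegrableOn f (uIcc a b) MeasureTheory.volume := by
      rw [uIcc_of_le hab.le]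
      exact hfc.integrableOn_compact isCompact_Icc
    have h1 : ContinuousOn (fun x => ∫ t in a..x, f t) (Icc a b) := by
      have := continuousOn_primitive_interval (a := a) (b := b) hint
      rwa [uIcc_of_le hab.le] at this
    exact h1.sub (((continuousOn_const.add hfc).div_const 2).mul
      ((continuousOn_id).sub continuousOn_const))
  have hanti : StrictAntiOn S (Icc a xl) := by
    apply strictAntiOn_of_deriv_neg (convex_Icc a xl)
      (hSc.mono (Icc_subset_Icc le_rfl hxb.le))
    intro x hx
    rw [interior_Icc] at hx
    rw [(hSd x ⟨hx.1, hx.2.trans hxb⟩).deriv]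
    exact div_neg_of_neg_of_pos (hgneg x hx) two_pos
  have hmono : StrictMonoOn S (Icc xl b) := by
    apply strictMonoOn_of_deriv_pos (convex_Icc xl b)
      (hSc.mono (Icc_subset_Icc hax.le le_rfl))
    intro x hx
    rw [interior_Icc] at hx
    rw [(hSd x ⟨hax.trans hx.1, hx.2⟩).deriv]
    exact div_pos (hgpos x hx) two_pos
  refine ⟨hanti, hmono, ?_⟩
  intro x hx hne
  rcases lt_or_gt_of_ne hne with h | h
  · exact hanti ⟨hx.1, h.le⟩ ⟨hax.le, le_rfl⟩ h
  · exact hmono ⟨le_rfl, hxb.le⟩ ⟨h.le, hx.2⟩ h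
end

section
/- Let a < p < b, let f : ℝ → ℝ be twice differentiable on [a,b] with f''(x) > 0 for x ∈ (a,p) and f''(x) < 0 for x ∈ (p,b), and suppose x_r ∈ (a,p) satisfies f(b) − f(x_r) − f'(x_r)·(b − x_r) = 0. Define S_r(x) = ∫_x^b f(t) dt − ((f(x)+f(b))/2)·(b−x). Then S_r is strictly increasing on [a, x_r] and strictly decreasing on [x_r, b]; in particular x_r is the unique maximizer of S_r on [a,b]. -/
open Set intervalIntegral

/-- For a convex/concave `f` on `[a,b]` with inflection point `p` (`f'' > 0` on `(a,p)`,
`f'' < 0` on `(p,b)`) and right tangency point `x_r ∈ (a,p)`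
(i.e. `f(b) − f(x_r) − f'(x_r)·(b − x_r) = 0`), the right-surface
`S_r(x) = ∫_x^b f(t) dt − ((f(x)+f(b))/2)·(b−x)` is strictly increasing on `[a, x_r]`
and strictly decreasing on `[x_r, b]`; in particular `x_r` is the unique maximizer of
`S_r` on `[a,b]`. -/
theorem right_surface_max_at_right_tangency (a b p xr : ℝ) (hap : a < p) (hpb : p < b)
    (f : ℝ → ℝ)
    (hd1 : ∀ x ∈ Set.Icc a b, DifferentiableAt ℝ f x)
    (hd2 : ∀ x ∈ Set.Icc a b, DifferentiableAt ℝ (deriv f) x)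
    (hpos : ∀ x ∈ Set.Ioo a p, 0 < deriv (deriv f) x)
    (hneg : ∀ x ∈ Set.Ioo p b, deriv (deriv f) x < 0)
    (hxr : xr ∈ Set.Ioo a p)
    (heq : f b - f xr - deriv f xr * (b - xr) = 0) :
    StrictMonoOn (fun x => (∫ t in x..b, f t) - ((f x + f b) / 2) * (b - x))
      (Set.Icc a xr) ∧
    StrictAntiOn (fun x => (∫ t in x..b, f t) - ((f x + f b) / 2) * (b - x))
      (Set.Icc xr b) ∧
    ∀ x ∈ Set.Icc a b, x ≠ xr →
      ((∫ t in x..b, f t) - ((f x + f b) / 2) * (b - x)) <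
        ((∫ t in xr..b, f t) - ((f xr + f b) / 2) * (b - xr)) := by
  have hab : a < b := hap.trans hpb
  set S : ℝ → ℝ := fun x => (∫ t in x..b, f t) - ((f x + f b) / 2) * (b - x) with hSdef
  set g : ℝ → ℝ := fun x => f b - f x - deriv f x * (b - x) with hgdef
  -- continuity facts
  have hcf : ContinuousOn f (Icc a b) := fun x hx => (hd1 x hx).continuousAt.continuousWithinAt
  have hcf' : ContinuousOn (deriv f) (Icc a b) :=
    fun x hx => (hd2 x hx).continuousAt.continuousWithinAt
  have hcfIoo : ContinuousOn f (Ioo a b) :=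
    hcf.mono Ioo_subset_Icc_self
  -- interval integrability
  have hint : ∀ x ∈ Icc a b, IntervalIntegrable f MeasureTheory.volume b x := by
    intro x hx
    apply ContinuousOn.intervalIntegrable
    apply hcf.mono
    rw [uIcc_of_ge hx.2]
    exact Icc_subset_Icc hx.1 le_rfl
  -- continuity of S on [a,b]
  have hScont : ContinuousOn S (Icc a b) := by
    have h1 : ContinuousOn (fun x => ∫ t in x..b, f t) (Icc a b) := by
      have := intervalIntegral.continuousOn_primitive_interval_left
        (f := f) (μ := MeasureTheory.volume) (a := a) (b := b)
        (by rw [uIcc_of_le hab.le]; exact hcf.integrableOn_Icc)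
      rwa [uIcc_of_le hab.le] at this
    exact h1.sub ((((hcf.add continuousOn_const).div_const 2).mul
      (continuousOn_const.sub continuousOn_id)))
  -- derivative of S on the interior
  have hS : ∀ x ∈ Ioo a b, HasDerivAt S (g x / 2) x := by
    intro x hx
    have hxI : x ∈ Icc a b := Ioo_subset_Icc_self hx
    have hI : HasDerivAt (fun u => ∫ t in u..b, f t) (-(f x)) x := by
      have h0 : HasDerivAt (fun u => ∫ t in b..u, f t) (f x) x :=
        intervalIntegral.integral_hasDerivAt_right (hint x hxI)
          (hcfIoo.stronglyMeasurableAtFilter isOpen_Ioo x hx)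
          (hd1 x hxI).continuousAt
      have : (fun u => ∫ t in u..b, f t) = fun u => -(∫ t in b..u, f t) := by
        funext u; rw [intervalIntegral.integral_symm]
      rw [this]
      exact h0.neg
    have hC : HasDerivAt (fun u => ((f u + f b) / 2) * (b - u))
        ((deriv f x / 2) * (b - x) + ((f x + f b) / 2) * (-1)) x := by
      have h1 : HasDerivAt (fun u => (f u + f b) / 2) (deriv f x / 2) x :=
        (((hd1 x hxI).hasDerivAt).add_const (f b)).div_const 2
      have h2 : HasDerivAt (fun u => b - u) (-1) x := by
        simpa using (hasDerivAt_id x).const_sub b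
      exact h1.mul h2
    have := hI.sub hC
    refine this.congr_deriv ?_
    simp only [hgdef]
    ring
  -- derivative of g on the interior
  have hg : ∀ x ∈ Ioo a b, HasDerivAt g (-(deriv (deriv f) x * (b - x))) x := by
    intro x hx
    have hxI : x ∈ Icc a b := Ioo_subset_Icc_self hx
    have h1 : HasDerivAt (fun u => f b - f u) (-(deriv f x)) x := by
      simpa using ((hd1 x hxI).hasDerivAt).const_sub (f b)
    have h2 : HasDerivAt (fun u => deriv f u * (b - u))
        (deriv (deriv f) x * (b - x) + deriv f x * (-1)) x := by
      have hb : HasDerivAt (fun u => b - u) (-1 : ℝ) x := by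
        simpa using (hasDerivAt_id x).const_sub b
      exact ((hd2 x hxI).hasDerivAt).mul hb
    have := h1.sub h2
    refine this.congr_deriv ?_
    ring
  have hgcont : ContinuousOn g (Icc a b) :=
    (continuousOn_const.sub hcf).sub (hcf'.mul (continuousOn_const.sub continuousOn_id))
  -- g strictly decreasing on [a,p]
  have hga : StrictAntiOn g (Icc a p) := by
    apply strictAntiOn_of_deriv_neg (convex_Icc a p)
      (hgcont.mono (Icc_subset_Icc le_rfl hpb.le))
    intro x hx
    rw [interior_Icc] at hx
    have hx' : x ∈ Ioo a b := ⟨hx.1, hx.2.trans hpb⟩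
    rw [(hg x hx').deriv]
    have := hpos x hx
    nlinarith [hx'.2]
  -- g strictly increasing on [p,b]
  have hgm : StrictMonoOn g (Icc p b) := by
    apply strictMonoOn_of_deriv_pos (convex_Icc p b)
      (hgcont.mono (Icc_subset_Icc hap.le le_rfl))
    intro x hx
    rw [interior_Icc] at hx
    have hx' : x ∈ Ioo a b := ⟨hap.trans hx.1, hx.2⟩
    rw [(hg x hx').deriv]
    have := hneg x hx
    nlinarith [hx'.2]
  have hgxr : g xr = 0 := heq
  have hgb : g b = 0 := by simp [hgdef]
  have hxrab : xr ∈ Icc a b := ⟨hxr.1.le, (hxr.2.trans hpb).le⟩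
  -- sign of g
  have hgpos : ∀ x ∈ Ico a xr, 0 < g x := by
    intro x hx
    have : g xr < g x :=
      hga ⟨hx.1, (hx.2.trans hxr.2).le⟩ ⟨hxr.1.le, hxr.2.le⟩ hx.2
    linarith [hgxr ▸ this]
  have hgneg : ∀ x ∈ Ioo xr b, g x < 0 := by
    intro x hx
    rcases le_or_gt x p with hxp | hxp
    · have : g x < g xr := hga ⟨hxr.1.le, hxr.2.le⟩ ⟨(hxr.1.trans hx.1).le, hxp⟩ hx.1
      linarith [hgxr ▸ this]
    · have : g x < g b := hgm ⟨hxp.le, hx.2.le⟩ ⟨hpb.le, le_rfl⟩ hx.2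
      linarith [hgb ▸ this]
  -- main monotonicity
  have hmono : StrictMonoOn S (Icc a xr) := by
    apply strictMonoOn_of_deriv_pos (convex_Icc a xr)
      (hScont.mono (Icc_subset_Icc le_rfl hxrab.2))
    intro x hx
    rw [interior_Icc] at hx
    have hx' : x ∈ Ioo a b := ⟨hx.1, hx.2.trans_le hxrab.2⟩
    rw [(hS x hx').deriv]
    exact div_pos (hgpos x ⟨hx.1.le, hx.2⟩) two_pos
  have hanti : StrictAntiOn S (Icc xr b) := by
    apply strictAntiOn_of_deriv_neg (convex_Icc xr b)
      (hScont.mono (Icc_subset_Icc hxrab.1 le_rfl))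
    intro x hx
    rw [interior_Icc] at hx
    have hx' : x ∈ Ioo a b := ⟨hxr.1.trans hx.1, hx.2⟩
    rw [(hS x hx').deriv]
    exact div_neg_of_neg_of_pos (hgneg x hx) two_pos
  refine ⟨hmono, hanti, ?_⟩
  intro x hx hne
  rcases lt_or_gt_of_ne hne with h | h
  · exact hmono ⟨hx.1, h.le⟩ ⟨hxrab.1, le_rfl⟩ h
  · exact hanti ⟨le_rfl, hxrab.2⟩ ⟨h.le, hx.2⟩ h
end

section
/- For each n ≥ 1 let a = x₀⁽ⁿ⁾ < x₁⁽ⁿ⁾ < ⋯ < x_n⁽ⁿ⁾ = b be a partition of [a,b] with mesh λ(n) = max_i (x_{i+1}⁽ⁿ⁾ − x_i⁽ⁿ⁾), let f : ℝ → ℝ, and on a probability space let ε₀⁽ⁿ⁾, …, ε_n⁽ⁿ⁾ be independent real random variables in L² with mean 0 and variance σ². Set φ_i⁽ⁿ⁾ = f(x_i⁽ⁿ⁾) + ε_i⁽ⁿ⁾ and let T_n(φ) and T_n(f) denote the total trapezoidal sums of the errored and true data over the n-th partition. If n·λ(n)² → 0 as n → ∞, then E[(T_n(φ) − T_n(f))²]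 → 0; i.e. the trapezoidal estimator is a consistent (L²) estimator of the trapezoidal sum of the true data. -/
open MeasureTheory ProbabilityTheory Filter

/-- Consistency of the trapezoidal estimator: for a sequence of partitions
`a = x₀⁽ⁿ⁾ < ⋯ < x_n⁽ⁿ⁾ = b` with mesh `λ(n)`, and errored data
`φ_i⁽ⁿ⁾ = f(x_i⁽ⁿ⁾) + ε_i⁽ⁿ⁾` with independent zero-mean `L²` errors of variance `σ²`,
if `n·λ(n)² → 0` then `E[(T_n(φ) − T_n(f))²] → 0`. -/
theorem trapezoid_consistent {Ω : Type*} [MeasureSpace Ω]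
    [IsProbabilityMeasure (volume : Measure Ω)]
    (a b : ℝ) (f : ℝ → ℝ) (σ : ℝ)
    (x : (n : ℕ) → Fin (n + 1) → ℝ)
    (hmono : ∀ n, 1 ≤ n → StrictMono (x n))
    (ha : ∀ n, 1 ≤ n → x n 0 = a) (hb : ∀ n, 1 ≤ n → x n (Fin.last n) = b)
    (ε : (n : ℕ) → Fin (n + 1) → Ω → ℝ)
    (hmem : ∀ n i, MemLp (ε n i) 2)
    (hindep : ∀ n, iIndepFun (ε n))
    (hmean : ∀ n i, ∫ ω, ε n i ω = 0)
    (hvar : ∀ n i, variance (ε n i) volume = σ ^ 2)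
    (lam : ℕ → ℝ)
    (hlam : ∀ n (hn : 0 < n), lam n =
      Finset.univ.sup' (Finset.univ_nonempty_iff.mpr ⟨⟨0, hn⟩⟩)
        fun i : Fin n => x n i.succ - x n i.castSucc)
    (hmesh : Tendsto (fun n : ℕ => (n : ℝ) * lam n ^ 2) atTop (nhds 0)) :
    Tendsto (fun n : ℕ => ∫ ω, (∑ i : Fin n,
        ((f (x n i.castSucc) + ε n i.castSucc ω + (f (x n i.succ) + ε n i.succ ω)) / 2) *
          (x n i.succ - x n i.castSucc) -
      ∑ i : Fin n,
        ((f (x n i.castSucc) + f (x n i.succ)) / 2) * (x n i.succ - x n i.castSucc)) ^ 2)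
      atTop (nhds 0) := by
  have hσ2 : (0:ℝ) ≤ σ ^ 2 := sq_nonneg σ
  have hg : Tendsto (fun n : ℕ => 2 * σ ^ 2 * ((n : ℝ) * lam n ^ 2)) atTop (nhds 0) := by
    simpa using hmesh.const_mul (2 * σ ^ 2)
  have key : ∀ n : ℕ, 1 ≤ n →
      (0 ≤ ∫ ω, (∑ i : Fin n,
        ((f (x n i.castSucc) + ε n i.castSucc ω + (f (x n i.succ) + ε n i.succ ω)) / 2) *
          (x n i.succ - x n i.castSucc) -
      ∑ i : Fin n,
        ((f (x n i.castSucc) + f (x n i.succ)) / 2) * (x n i.succ - x n i.castSucc)) ^ 2) ∧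
      ((∫ ω, (∑ i : Fin n,
        ((f (x n i.castSucc) + ε n i.castSucc ω + (f (x n i.succ) + ε n i.succ ω)) / 2) *
          (x n i.succ - x n i.castSucc) -
      ∑ i : Fin n,
        ((f (x n i.castSucc) + f (x n i.succ)) / 2) * (x n i.succ - x n i.castSucc)) ^ 2)
        ≤ 2 * σ ^ 2 * ((n : ℝ) * lam n ^ 2)) := by
    intro n hn
    have hn0 : 0 < n := hn
    set Δ : Fin n → ℝ := fun i => x n i.succ - x n i.castSucc with hΔdef
    have hΔpos : ∀ i : Fin n, 0 < Δ i := fun i =>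
      sub_pos.mpr (hmono n hn (Fin.castSucc_lt_succ : i.castSucc < i.succ))
    have hΔle : ∀ i : Fin n, Δ i ≤ lam n := by
      intro i
      rw [hlam n hn0]
      exact Finset.le_sup' _ (Finset.mem_univ i)
    have hlam0 : 0 ≤ lam n := le_trans (hΔpos ⟨0, hn0⟩).le (hΔle ⟨0, hn0⟩)
    set c : Fin (n + 1) → ℝ := fun j =>
      ∑ i : Fin n, ((if i.castSucc = j then Δ i / 2 else 0) +
        (if i.succ = j then Δ i / 2 else 0)) with hcdef
    have hc_nonneg : ∀ j, 0 ≤ c j := by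
      intro j
      refine Finset.sum_nonneg fun i _ => add_nonneg ?_ ?_ <;>
        · split
          · exact (half_pos (hΔpos i)).le
          · exact le_rfl
    have hc_le : ∀ j, c j ≤ lam n := by
      intro j
      show (∑ i : Fin n, ((if i.castSucc = j then Δ i / 2 else 0) +
        (if i.succ = j then Δ i / 2 else 0))) ≤ lam n
      rw [Finset.sum_add_distrib]
      have h1 : (∑ i : Fin n, if i.castSucc = j then Δ i / 2 else 0) ≤ lam n / 2 := by
        by_cases hj : ∃ k : Fin n, k.castSucc = j
        · obtain ⟨k, hk⟩ := hj
          rw [Finset.sum_eq_single k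
            (fun i _ hik => if_neg (fun h => hik (Fin.castSucc_injective n (h.trans hk.symm))))
            (fun h => absurd (Finset.mem_univ k) h)]
          rw [if_pos hk]
          exact div_le_div_of_nonneg_right (hΔle k) two_pos.le
        · rw [Finset.sum_eq_zero (fun i _ => if_neg (fun h => hj ⟨i, h⟩))]
          exact div_nonneg hlam0 two_pos.le
      have h2 : (∑ i : Fin n, if i.succ = j then Δ i / 2 else 0) ≤ lam n / 2 := by
        by_cases hj : ∃ k : Fin n, k.succ = j
        · obtain ⟨k, hk⟩ := hj
          rw [Finset.sum_eq_single k
            (fun i _ hik => if_neg (fun h => hik (Fin.succ_injective n (h.trans hk.symm))))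
            (fun h => absurd (Finset.mem_univ k) h)]
          rw [if_pos hk]
          exact div_le_div_of_nonneg_right (hΔle k) two_pos.le
        · rw [Finset.sum_eq_zero (fun i _ => if_neg (fun h => hj ⟨i, h⟩))]
          exact div_nonneg hlam0 two_pos.le
      linarith
    -- the integrand equals (∑ j, c j * ε n j ω)^2
    have hkey : ∀ ω : Ω, (∑ i : Fin n,
        ((f (x n i.castSucc) + ε n i.castSucc ω + (f (x n i.succ) + ε n i.succ ω)) / 2) *
          (x n i.succ - x n i.castSucc) -
      ∑ i : Fin n,
        ((f (x n i.castSucc) + f (x n i.succ)) / 2) * (x n i.succ - x n i.castSucc))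
        = ∑ j : Fin (n + 1), c j * ε n j ω := by
      intro ω
      rw [← Finset.sum_sub_distrib]
      have hrhs : ∑ j : Fin (n + 1), c j * ε n j ω =
          ∑ i : Fin n, ((Δ i / 2) * ε n i.castSucc ω + (Δ i / 2) * ε n i.succ ω) := by
        simp only [hcdef, Finset.sum_mul, add_mul]
        rw [Finset.sum_comm]
        refine Finset.sum_congr rfl fun i _ => ?_
        rw [Finset.sum_add_distrib]
        congr 1 <;> simp [ite_mul]
      rw [hrhs]
      refine Finset.sum_congr rfl fun i _ => ?_
      simp only [hΔdef]
      ring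
    have hint : ∀ j : Fin (n + 1), Integrable (fun ω => c j * ε n j ω) :=
      fun j => ((hmem n j).integrable one_le_two).const_mul _
    have hX2 : ∀ j : Fin (n + 1), MemLp (fun ω => c j * ε n j ω) 2 :=
      fun j => (hmem n j).const_mul _
    set S : Ω → ℝ := fun ω => ∑ j : Fin (n + 1), c j * ε n j ω with hSdef
    have hSmem : MemLp S 2 := memLp_finset_sum _ fun j _ => hX2 j
    have hSmean : ∫ ω, S ω = 0 := by
      rw [hSdef]
      rw [integral_finset_sum _ fun j _ => hint j]
      refine Finset.sum_eq_zero fun j _ => ?_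
      rw [integral_const_mul, hmean n j, mul_zero]
    have hXind : iIndepFun (fun j (ω : Ω) => c j * ε n j ω) :=
      (hindep n).comp (fun j y => c j * y) fun j => measurable_const_mul _
    have hvarsum : variance S volume = ∑ j : Fin (n + 1), c j ^ 2 * σ ^ 2 := by
      have : S = ∑ j : Fin (n + 1), (fun ω => c j * ε n j ω) := by
        funext ω; simp [hSdef]
      rw [this, IndepFun.variance_sum (fun j _ => hX2 j)
        (fun i _ j _ hij => hXind.indepFun hij)]
      refine Finset.sum_congr rfl fun j _ => ?_
      have : variance (fun ω => c j * ε n j ω) volume = c j ^ 2 * variance (ε n j) volume :=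
        variance_const_mul _ _ _
      rw [this, hvar n j]
    have hintegral : (∫ ω, (∑ i : Fin n,
        ((f (x n i.castSucc) + ε n i.castSucc ω + (f (x n i.succ) + ε n i.succ ω)) / 2) *
          (x n i.succ - x n i.castSucc) -
      ∑ i : Fin n,
        ((f (x n i.castSucc) + f (x n i.succ)) / 2) * (x n i.succ - x n i.castSucc)) ^ 2)
        = ∑ j : Fin (n + 1), c j ^ 2 * σ ^ 2 := by
      have h1 : (∫ ω, (∑ i : Fin n,
          ((f (x n i.castSucc) + ε n i.castSucc ω + (f (x n i.succ) + ε n i.succ ω)) / 2) *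
            (x n i.succ - x n i.castSucc) -
        ∑ i : Fin n,
          ((f (x n i.castSucc) + f (x n i.succ)) / 2) * (x n i.succ - x n i.castSucc)) ^ 2)
          = ∫ ω, (S ω) ^ 2 := by
        refine integral_congr_ae (Filter.Eventually.of_forall fun ω => ?_)
        dsimp only
        rw [hkey ω]
      rw [h1, ← hvarsum]
      have := variance_eq_sub hSmem
      simp only [Pi.pow_apply] at this
      rw [this, hSmean]
      ring
    rw [hintegral]
    constructor
    · exact Finset.sum_nonneg fun j _ => mul_nonneg (sq_nonneg _) hσ2
    calc ∑ j : Fin (n + 1), c j ^ 2 * σ ^ 2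
        ≤ ∑ _j : Fin (n + 1), lam n ^ 2 * σ ^ 2 := by
          refine Finset.sum_le_sum fun j _ => ?_
          exact mul_le_mul_of_nonneg_right
            (pow_le_pow_left₀ (hc_nonneg j) (hc_le j) 2) hσ2
      _ = (n + 1 : ℝ) * (lam n ^ 2 * σ ^ 2) := by
          rw [Finset.sum_const, Finset.card_univ, Fintype.card_fin]
          push_cast; ring
      _ ≤ 2 * σ ^ 2 * ((n : ℝ) * lam n ^ 2) := by
          have hn1 : (1 : ℝ) ≤ (n : ℝ) := by exact_mod_cast hn
          have hl2 : 0 ≤ lam n ^ 2 * σ ^ 2 := mul_nonneg (sq_nonneg _) hσ2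
          nlinarith [sq_nonneg (lam n), mul_nonneg (sq_nonneg (lam n)) hσ2]
  refine squeeze_zero' ?_ ?_ hg <;>
    filter_upwards [eventually_ge_atTop 1] with n hn
  · exact (key n hn).1
  · exact (key n hn).2
end
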